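/- If 𝔼[W log W] < log b and 𝔼[W^t] < ∞ for all t > 0, then 0 < D_F(W,b) < 1. -/

import Mathlib

open MeasureTheory ProbabilityTheory Filter Topology
open scoped ENNReal NNReal

noncomputable section

namespace MCCM

/-- Left endpoint of the `b`-adic interval indexed by the word `u` of length `n`. -/
def adicLeft (b n : ℕ) (u : Fin n → Fin b) : ℝ :=
  ∑ k : Fin n, (u k : ℝ) / (b : ℝ) ^ ((k : ℕ) + 1)

/-- The `b`-adic interval `I_u` indexed by the word `u`. -/
def adicI (b n : ℕ) (u : Fin n → Fin b) : Set ℝ :=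
  Set.Ico (adicLeft b n u) (adicLeft b n u + 1 / (b : ℝ) ^ n)

/-- The prefix of length `j` of the word `u`, as a list. -/
def wordPrefix (b n : ℕ) (u : Fin n → Fin b) (j : ℕ) : List (Fin b) :=
  (List.ofFn u).take j

/-- The complex exponential `e^{-2πi t ζ}`. -/
def eker (ζ t : ℝ) : ℂ :=
  Complex.exp ((-(2 * Real.pi * t * ζ) : ℝ) * Complex.I)

/-- Fourier transform of a measure on `ℝ`. -/
def ft (μ : Measure ℝ) (ζ : ℝ) : ℂ := ∫ t, eker ζ t ∂μ

/-- The Fourier dimension of a measure on `ℝ`. -/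
def fourierDim (μ : Measure ℝ) : ℝ :=
  sSup {D : ℝ | D ∈ Set.Icc (0 : ℝ) 1 ∧
    ∃ c : ℝ, 0 < c ∧ ∀ ζ : ℝ, ‖ft μ ζ‖ ≤ c * (1 + |ζ|) ^ (-D / 2)}

variable {Ω : Type*} [MeasureSpace Ω]

/-- The product of the weights over the prefixes `u|_j`, `j = 0, …, n`. -/
def cascadeWeight (b : ℕ) (WF : List (Fin b) → Ω → ℝ) (n : ℕ) (u : Fin n → Fin b) (ω : Ω) : ℝ :=
  ∏ j ∈ Finset.range (n + 1), WF (wordPrefix b n u j) ω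

/-- The random cascade measure `μ_n`. -/
def cascadeMeasure (b : ℕ) (WF : List (Fin b) → Ω → ℝ) (n : ℕ) (ω : Ω) : Measure ℝ :=
  volume.withDensity fun t => ENNReal.ofReal
    (∑ u : Fin n → Fin b, cascadeWeight b WF n u ω * (adicI b n u).indicator (fun _ => (1 : ℝ)) t)

/-- `W` is a random cascade weight: nonnegative, mean one, non-constant. -/
structure IsWeight (b : ℕ) (W : Ω → ℝ) : Prop where
  two_le : 2 ≤ b
  meas : Measurable W
  nonneg : ∀ ω, 0 ≤ W ω
  integrable : Integrable W
  mean_one : (∫ ω, W ω) = 1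
  nonconst : ∀ c : ℝ, ¬ (∀ᵐ ω : Ω, W ω = c)

/-- `WF` is a family of i.i.d. copies of `W` indexed by the nonempty words, with `WF ∅ ≡ 1`. -/
structure IsCopies (b : ℕ) (W : Ω → ℝ) (WF : List (Fin b) → Ω → ℝ) : Prop where
  root : ∀ ω, WF [] ω = 1
  meas : ∀ u, Measurable (WF u)
  nonneg : ∀ u ω, 0 ≤ WF u ω
  ident : ∀ u : List (Fin b), u ≠ [] → Measure.map (WF u) ℙ = Measure.map W ℙ
  indep : iIndepFun
    (fun u : {u : List (Fin b) // u ≠ []} => WF u.1) ℙ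

/-- `μlim` is a random finite measure on `[0,1]` which is almost surely
the weak limit of the cascade measures `μ_n`. -/
structure IsCascadeLimit (b : ℕ) (WF : List (Fin b) → Ω → ℝ) (μlim : Ω → Measure ℝ) : Prop where
  finite : ∀ ω, IsFiniteMeasure (μlim ω)
  support : ∀ ω, μlim ω (Set.Icc (0 : ℝ) 1)ᶜ = 0
  weak : ∀ᵐ ω : Ω, ∀ f : ℝ → ℝ, Continuous f →
    Tendsto (fun n => ∫ t, f t ∂ (cascadeMeasure b WF n ω)) atTop (𝓝 (∫ t, f t ∂ (μlim ω)))

/-- `𝔼[W²]`. -/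
def eW2 (W : Ω → ℝ) : ℝ := ∫ ω, (W ω) ^ 2

/-- `𝔼[W⁽²⁾ log W⁽²⁾]` where `W⁽²⁾ = W²/𝔼[W²]`. -/
def sqLogMoment (W : Ω → ℝ) : ℝ :=
  ∫ ω, ((W ω) ^ 2 / eW2 W) * Real.log ((W ω) ^ 2 / eW2 W)

open Classical in
/-- The quantity `D_F(W, b)`. -/
def DF (b : ℕ) (W : Ω → ℝ) : ℝ :=
  if sqLogMoment W ≤ Real.log b then 1 - Real.log (eW2 W) / Real.log b
  else 1 - ⨅ t : Set.Icc (1/2 : ℝ) 1,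
    Real.log (∫ ω, (b : ℝ) ^ (1 - (t : ℝ)) * (W ω) ^ (2 * (t : ℝ))) / ((t : ℝ) * Real.log b)

/-- `log W` is non-lattice. -/
def NonLattice (W : Ω → ℝ) : Prop :=
  ¬ ∃ a d : ℝ, ∀ᵐ ω : Ω, 0 < W ω → ∃ k : ℤ, Real.log (W ω) = a + d * k

end MCCM

namespace MCCM



lemma neg_mul_log_le_one {x : ℝ} (h0 : 0 < x) (h1 : x ≤ 1) : x * (-Real.log x) ≤ 1 := by
  have h := Real.log_le_sub_one_of_pos (inv_pos.2 h0)
  rw [Real.log_inv] at h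
  have h2 : x * (-Real.log x) ≤ x * (x⁻¹ - 1) := by
    apply mul_le_mul_of_nonneg_left h h0.le
  have h3 : x * x⁻¹ = 1 := mul_inv_cancel₀ h0.ne'
  nlinarith

lemma exp_slope_le (u : ℝ) : Real.exp u - 1 ≤ u * Real.exp u := by
  have h1 : 1 - u ≤ Real.exp (-u) := by have := Real.add_one_le_exp (-u); linarith
  have h2 : Real.exp u * (1 - u) ≤ Real.exp u * Real.exp (-u) :=
    mul_le_mul_of_nonneg_left h1 (Real.exp_pos u).le
  rw [← Real.exp_add, add_neg_cancel, Real.exp_zero] at h2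
  nlinarith

lemma rpow_split {x s : ℝ} (hx0 : 0 < x) : x ^ s = x * x ^ (s - 1) := by
  nth_rewrite 1 [show s = 1 + (s-1) by ring]
  rw [Real.rpow_add hx0, Real.rpow_one]

lemma slope_abs_bound {x s : ℝ} (hx : 0 ≤ x) (hs1 : 1 < s) (hs2 : s ≤ 2) :
    |(x ^ s - x) / (s - 1)| ≤ x ^ (3:ℝ) + 1 := by
  have h : 0 < s - 1 := by linarith
  have h3nn : 0 ≤ x ^ (3:ℝ) := Real.rpow_nonneg hx _
  rcases eq_or_lt_of_le hx with hx0 | hx0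
  · rw [← hx0, Real.zero_rpow (by positivity : s ≠ 0)]
    simp
  have hrnn : 0 ≤ x ^ (s-1) := Real.rpow_nonneg hx _
  have hsplit : x ^ s = x * x ^ (s - 1) := rpow_split hx0
  by_cases hx1 : x ≤ 1
  · -- 0 < x ≤ 1 : x^s ≤ x and x - x^s ≤ (s-1)
    have hxs : x ^ s ≤ x := by
      calc x ^ s ≤ x ^ (1:ℝ) := Real.rpow_le_rpow_of_exponent_ge hx0 hx1 hs1.le
      _ = x := Real.rpow_one x
    have hhh : 1 - x ^ (s-1) ≤ -((s-1) * Real.log x) := by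
      rw [Real.rpow_def_of_pos hx0]
      have := Real.add_one_le_exp (Real.log x * (s-1))
      nlinarith
    have hml := neg_mul_log_le_one hx0 hx1
    have hkey : x - x ^ s ≤ (s - 1) := by
      have h4 : x * (1 - x ^ (s-1)) ≤ x * (-((s-1) * Real.log x)) :=
        mul_le_mul_of_nonneg_left hhh hx0.le
      nlinarith
    rw [abs_le]
    constructor
    · rw [le_div_iff₀ h]; nlinarith
    · rw [div_le_iff₀ h]; nlinarith
  · -- 1 ≤ x
    push_neg at hx1
    have hx1' : (1:ℝ) ≤ x := hx1.le
    have hxs : x ≤ x ^ s := by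
      calc x = x ^ (1:ℝ) := (Real.rpow_one x).symm
      _ ≤ x ^ s := Real.rpow_le_rpow_of_exponent_le hx1' hs1.le
    have hlx : Real.log x ≤ x - 1 := Real.log_le_sub_one_of_pos hx0
    have hxh : x ^ (s-1) ≤ x := by
      calc x ^ (s-1) ≤ x ^ (1:ℝ) := Real.rpow_le_rpow_of_exponent_le hx1' (by linarith)
      _ = x := Real.rpow_one x
    have hexp : x ^ (s-1) - 1 ≤ (s-1) * Real.log x * x ^ (s-1) := by
      rw [Real.rpow_def_of_pos hx0]
      have := exp_slope_le (Real.log x * (s-1))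
      nlinarith
    have hcube : x ^ (3:ℝ) = x * x * x := by
      rw [show (3:ℝ) = ((3:ℕ):ℝ) by norm_num, Real.rpow_natCast]
      ring
    have hlxnn : 0 ≤ Real.log x := Real.log_nonneg hx1'
    have e1 : Real.log x * x ^ (s-1) ≤ (x-1) * x :=
      mul_le_mul hlx hxh hrnn (by linarith)
    have h1 : x ^ (s-1) - 1 ≤ (s-1) * ((x-1) * x) := by
      have := mul_le_mul_of_nonneg_left e1 h.le
      nlinarith
    have h2 : x * (x ^ (s-1) - 1) ≤ x * ((s-1) * ((x-1) * x)) :=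
      mul_le_mul_of_nonneg_left h1 hx0.le
    rw [hcube, abs_le]
    constructor
    · rw [le_div_iff₀ h]; nlinarith
    · rw [div_le_iff₀ h]; nlinarith
lemma sq_log_abs_bound {x : ℝ} (hx : 0 ≤ x) : |x ^ 2 * Real.log x| ≤ x ^ (3:ℝ) + 1 := by
  have h3nn : 0 ≤ x ^ (3:ℝ) := Real.rpow_nonneg hx _
  rcases eq_or_lt_of_le hx with hx0 | hx0
  · rw [← hx0]; simp
  have hcube : x ^ (3:ℝ) = x * x * x := by
    rw [show (3:ℝ) = ((3:ℕ):ℝ) by norm_num, Real.rpow_natCast]; ring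
  by_cases hx1 : x ≤ 1
  · have hml := neg_mul_log_le_one hx0 hx1
    have hml2 : x * (x * (-Real.log x)) ≤ x * 1 := mul_le_mul_of_nonneg_left hml hx0.le
    have hlognp : Real.log x ≤ 0 := Real.log_nonpos hx0.le hx1
    have hnn : 0 ≤ x ^ 2 * (-Real.log x) :=
      mul_nonneg (sq_nonneg x) (by linarith)
    rw [abs_le]
    constructor
    · nlinarith
    · nlinarith
  · push_neg at hx1
    have hlx : Real.log x ≤ x - 1 := Real.log_le_sub_one_of_pos hx0
    have hlxnn : 0 ≤ Real.log x := Real.log_nonneg hx1.le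
    have h2 : x ^ 2 * Real.log x ≤ x ^ 2 * (x - 1) :=
      mul_le_mul_of_nonneg_left hlx (sq_nonneg x)
    rw [hcube, abs_of_nonneg (by positivity)]
    nlinarith


set_option maxHeartbeats 2000000 in
theorem statement13 {Ω : Type*} [MeasureSpace Ω] [IsProbabilityMeasure (ℙ : Measure Ω)]
    (b : ℕ) (W : Ω → ℝ) (hW : IsWeight b W)
    (hmom : ∀ t : ℝ, 0 < t → Integrable fun ω => W ω ^ t)
    (hnd : (∫ ω, W ω * Real.log (W ω)) < Real.log b) :
    0 < DF b W ∧ DF b W < 1 := by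
  classical
  obtain ⟨hb2, hWmeas, hWnn, hWint, hWmean, hWnc⟩ := hW
  have hbR : (2:ℝ) ≤ (b:ℝ) := by exact_mod_cast hb2
  have hb0 : (0:ℝ) < (b:ℝ) := by linarith
  have hL : 0 < Real.log b := Real.log_pos (by linarith)
  -- positivity of moments
  have hM : ∀ s : ℝ, 0 < s → 0 < ∫ ω, W ω ^ s := by
    intro s hs
    have hint := hmom s hs
    have hnn : 0 ≤ fun ω => W ω ^ s := fun ω => Real.rpow_nonneg (hWnn ω) s
    rcases (integral_nonneg hnn).lt_or_eq with h | h
    · exact h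
    · exfalso
      have h0 : (fun ω => W ω ^ s) =ᵐ[ℙ] 0 := (integral_eq_zero_iff_of_nonneg hnn hint).1 h.symm
      have hW0 : W =ᵐ[(ℙ : Measure Ω)] 0 := by
        refine h0.mono (fun ω hω => ?_)
        by_contra hne
        have hpos : 0 < W ω := lt_of_le_of_ne (hWnn ω) (Ne.symm hne)
        exact (Real.rpow_pos_of_pos hpos s).ne' hω
      have hz : (∫ ω, W ω) = 0 := by
        rw [integral_congr_ae hW0]; simp
      rw [hWmean] at hz; norm_num at hz
  -- square integrability
  have hint2 : Integrable (fun ω => W ω ^ 2) (ℙ : Measure Ω) := by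
    have h := hmom 2 (by norm_num)
    have he : (fun ω => W ω ^ (2:ℝ)) = fun ω => W ω ^ 2 := funext fun ω => Real.rpow_two (W ω)
    rwa [he] at h
  set m : ℝ := ∫ ω, W ω ^ 2 with hmdef
  have hm2 : (∫ ω, W ω ^ (2:ℝ)) = m := by
    rw [hmdef]
    exact integral_congr_ae (ae_of_all _ fun ω => Real.rpow_two (W ω))
  have hm0' : 0 < m := by rw [← hm2]; exact hM 2 (by norm_num)
  have hint2' : Integrable (fun ω => W ω^2 - 2*W ω) (ℙ : Measure Ω) :=
    hint2.sub (hWint.const_mul 2)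
  -- m > 1
  have hm1 : 1 < m := by
    have hexpand : (fun ω => (W ω - 1)^2) = fun ω => W ω^2 - 2*W ω + 1 := funext fun ω => by ring
    have hsqint : Integrable (fun ω => (W ω - 1)^2) (ℙ : Measure Ω) := by
      rw [hexpand]
      exact hint2'.add (integrable_const 1)
    have hvar : 0 < ∫ ω, (W ω - 1)^2 := by
      rcases (integral_nonneg (f := fun ω => (W ω - 1)^2) fun ω => sq_nonneg _).lt_or_eq with h|h
      · exact h
      · exfalso
        have h0 := (integral_eq_zero_iff_of_nonneg (fun ω => sq_nonneg _) hsqint).1 h.symm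
        refine hWnc 1 (h0.mono fun ω hω => ?_)
        have := sq_eq_zero_iff.1 hω
        linarith
    have hcomp : ∫ ω, (W ω - 1)^2 = m - 1 := by
      rw [hexpand, integral_add hint2' (integrable_const 1),
        integral_sub hint2 (hWint.const_mul 2), integral_const_mul, hWmean, integral_const]
      simp
      rw [← hmdef]
      ring
    linarith [hcomp ▸ hvar]
  have hlogm : 0 < Real.log m := Real.log_pos hm1
  -- integrability of W² log W
  have hint3 : Integrable (fun ω => W ω ^ (3:ℝ) + 1) (ℙ : Measure Ω) :=
    (hmom 3 (by norm_num)).add (integrable_const 1)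
  have hintsqlog : Integrable (fun ω => W ω^2 * Real.log (W ω)) (ℙ : Measure Ω) := by
    refine hint3.mono' ?_ (ae_of_all _ fun ω => ?_)
    · exact ((hWmeas.pow_const 2).mul (Real.measurable_log.comp hWmeas)).aestronglyMeasurable
    · rw [Real.norm_eq_abs]
      exact sq_log_abs_bound (hWnn ω)
  set A : ℝ := ∫ ω, W ω^2 * Real.log (W ω) with hAdef
  -- tangent line inequality at 2 (Jensen via log x ≤ x - 1)
  have tangent : ∀ s : ℝ, 0 < s →
      (s - 2) * A ≤ m * (Real.log (∫ ω, W ω ^ s) - Real.log m) := by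
    intro s hs
    set Ms : ℝ := ∫ ω, W ω ^ s with hMsdef
    have hMspos : 0 < Ms := hM s hs
    set c : ℝ := Ms / m with hcdef
    have hcpos : 0 < c := div_pos hMspos hm0'
    have hpt : ∀ ω, (s-2) * (W ω^2 * Real.log (W ω)) ≤ W ω^2 * Real.log c + W ω ^ s / c - W ω^2 := by
      intro ω
      rcases eq_or_lt_of_le (hWnn ω) with h0 | h0
      · rw [← h0]
        simp [Real.zero_rpow hs.ne']
      · have h1 : 0 < W ω ^ (s-2) := Real.rpow_pos_of_pos h0 _
        have h2 : Real.log (W ω ^ (s-2) / c) ≤ W ω ^(s-2)/c - 1 :=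
          Real.log_le_sub_one_of_pos (by positivity)
        rw [Real.log_div h1.ne' hcpos.ne', Real.log_rpow h0] at h2
        have h4 : W ω^2 * W ω^(s-2) = W ω ^ s := by
          have e1 : (W ω)^2 = W ω ^ (2:ℝ) := (Real.rpow_two (W ω)).symm
          rw [e1, ← Real.rpow_add h0, show (2:ℝ) + (s-2) = s by ring]
        have h3 : W ω^2 * ((s-2) * Real.log (W ω)) ≤ W ω^2 * (Real.log c + (W ω^(s-2)/c - 1)) :=
          mul_le_mul_of_nonneg_left (by linarith) (sq_nonneg _)
        calc (s-2) * (W ω^2 * Real.log (W ω)) = W ω^2 * ((s-2) * Real.log (W ω)) := by ring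
        _ ≤ W ω^2 * (Real.log c + (W ω^(s-2)/c - 1)) := h3
        _ = W ω^2 * Real.log c + (W ω^2 * W ω^(s-2))/c - W ω^2 := by ring
        _ = W ω^2 * Real.log c + W ω^s/c - W ω^2 := by rw [h4]
    have ha : Integrable (fun ω => W ω^2 * Real.log c) (ℙ : Measure Ω) := hint2.mul_const _
    have hbb : Integrable (fun ω => W ω ^ s / c) (ℙ : Measure Ω) := (hmom s hs).div_const _
    have hab : Integrable (fun ω => W ω^2 * Real.log c + W ω ^ s / c) (ℙ : Measure Ω) := ha.add hbb
    have hintRHS : Integrable (fun ω => W ω^2 * Real.log c + W ω ^ s / c - W ω^2) (ℙ : Measure Ω) :=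
      hab.sub hint2
    have hle := integral_mono (hintsqlog.const_mul (s-2)) hintRHS hpt
    rw [integral_const_mul, integral_sub hab hint2, integral_add ha hbb,
      integral_mul_const, integral_div] at hle
    rw [← hAdef, ← hmdef, ← hMsdef] at hle
    have hMc : Ms / c = m := by
      rw [hcdef]
      field_simp
    rw [hMc] at hle
    have hlogc : Real.log c = Real.log Ms - Real.log m := by
      rw [hcdef]; exact Real.log_div hMspos.ne' hm0'.ne'
    rw [hlogc] at hle
    linarith
  -- Bernoulli: moments ≥ 1 for s ≥ 1
  have hM1 : ∀ s : ℝ, 1 ≤ s → (1:ℝ) ≤ ∫ ω, W ω ^ s := by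
    intro s hs
    have hpt : ∀ ω, 1 + s * (W ω - 1) ≤ W ω ^ s := by
      intro ω
      have h := one_add_mul_self_le_rpow_one_add
        (show (-1:ℝ) ≤ W ω - 1 by linarith [hWnn ω]) hs
      calc 1 + s * (W ω - 1) ≤ (1 + (W ω - 1)) ^ s := h
      _ = W ω ^ s := by congr 1; ring
    have hsub : Integrable (fun ω => W ω - 1) (ℙ : Measure Ω) := hWint.sub (integrable_const 1)
    have hmul : Integrable (fun ω => s * (W ω - 1)) (ℙ : Measure Ω) := hsub.const_mul s
    have hintL : Integrable (fun ω => 1 + s * (W ω - 1)) (ℙ : Measure Ω) :=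
      (integrable_const 1).add hmul
    have h1 := integral_mono hintL (hmom s (by linarith)) hpt
    rw [integral_add (integrable_const 1) hmul, integral_const_mul,
      integral_sub hWint (integrable_const 1), hWmean, integral_const] at h1
    simpa using h1
  -- existence of s: 1 < s ≤ 2 with log M(s) < (s-1) log b
  have hseq : ∃ s : ℝ, 1 < s ∧ s ≤ 2 ∧ Real.log (∫ ω, W ω ^ s) < (s - 1) * Real.log b := by
    set F : ℕ → Ω → ℝ :=
      fun n ω => (W ω ^ (1 + 1/(n+1:ℝ)) - W ω) / (1 + 1/(n+1:ℝ) - 1) with hFdef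
    have hspos : ∀ n : ℕ, (0:ℝ) < 1/(n+1:ℝ) := fun n => by positivity
    have hsle : ∀ n : ℕ, 1/(n+1:ℝ) ≤ 1 := fun n => by
      rw [div_le_one (by positivity)]
      have : (0:ℝ) ≤ (n:ℝ) := Nat.cast_nonneg n
      linarith
    have hFint : ∀ n, Integrable (F n) (ℙ : Measure Ω) := by
      intro n
      have h1 : Integrable (fun ω => W ω ^ (1 + 1/(n+1:ℝ)) - W ω) (ℙ : Measure Ω) :=
        (hmom _ (by positivity)).sub hWint
      exact h1.div_const _
    have hbound : ∀ n, ∀ᵐ ω ∂(ℙ:Measure Ω), ‖F n ω‖ ≤ W ω ^ (3:ℝ) + 1 := by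
      intro n
      refine ae_of_all _ fun ω => ?_
      rw [Real.norm_eq_abs]
      have h1 : 1 < 1 + 1/(n+1:ℝ) := by linarith [hspos n]
      have h2 : 1 + 1/(n+1:ℝ) ≤ 2 := by linarith [hsle n]
      exact slope_abs_bound (hWnn ω) h1 h2
    have hlim : ∀ᵐ ω ∂(ℙ:Measure Ω), Filter.Tendsto (fun n => F n ω) Filter.atTop
        (𝓝 (W ω * Real.log (W ω))) := by
      refine ae_of_all _ fun ω => ?_
      rcases eq_or_lt_of_le (hWnn ω) with h0 | h0
      · have hz : ∀ n : ℕ, F n ω = 0 := by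
          intro n
          simp only [hFdef]
          rw [← h0, Real.zero_rpow (by positivity : (1 + 1/(n+1:ℝ)) ≠ 0)]
          simp
        have he : (fun n => F n ω) = fun _ => (0:ℝ) := funext hz
        rw [he, ← h0]
        simp [Real.log_zero]
      · have hd : HasDerivAt (fun y : ℝ => W ω ^ y) (W ω * Real.log (W ω)) 1 := by
          have heq : (fun y : ℝ => W ω ^ y) = fun y => Real.exp (Real.log (W ω) * y) :=
            funext fun y => Real.rpow_def_of_pos h0 y
          rw [heq]
          have hd1 : HasDerivAt (fun y : ℝ => Real.log (W ω) * y) (Real.log (W ω)) 1 := by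
            simpa using (hasDerivAt_id (1:ℝ)).const_mul (Real.log (W ω))
          have hcomp := (Real.hasDerivAt_exp (Real.log (W ω) * 1)).comp 1 hd1
          simp only [Function.comp_def, mul_one, Real.exp_log h0] at hcomp
          exact hcomp
        have hslope := hasDerivAt_iff_tendsto_slope.1 hd
        have htend : Filter.Tendsto (fun n : ℕ => 1 + 1/(n+1:ℝ)) Filter.atTop (𝓝[≠] (1:ℝ)) := by
          refine tendsto_nhdsWithin_of_tendsto_nhds_of_eventually_within _ ?_ ?_
          · simpa using tendsto_one_div_add_atTop_nhds_zero_nat.const_add (1:ℝ)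
          · exact Filter.Eventually.of_forall fun n =>
              Set.mem_compl_singleton_iff.mpr (ne_of_gt (by linarith [hspos n]))
        have hcomp2 := hslope.comp htend
        refine hcomp2.congr fun n => ?_
        simp only [Function.comp_apply, hFdef]
        rw [slope_def_field, Real.rpow_one]
    have hDCT := tendsto_integral_of_dominated_convergence _
      (fun n => (hFint n).aestronglyMeasurable) hint3 hbound hlim
    obtain ⟨n, hn⟩ := (Filter.Tendsto.eventually_lt_const hnd hDCT).exists
    have hsgt : 1 < 1 + 1/(n+1:ℝ) := by linarith [hspos n]
    have hMspos := hM (1 + 1/(n+1:ℝ)) (by linarith)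
    have hintval : ∫ ω, F n ω = ((∫ ω, W ω ^ (1 + 1/(n+1:ℝ))) - 1)/(1 + 1/(n+1:ℝ) - 1) := by
      simp only [hFdef]
      rw [integral_div, integral_sub (hmom _ (by linarith)) hWint, hWmean]
    rw [hintval, div_lt_iff₀ (by linarith : (0:ℝ) < 1 + 1/(n+1:ℝ) - 1)] at hn
    refine ⟨1 + 1/(n+1:ℝ), hsgt, by linarith [hsle n], ?_⟩
    have hlog := Real.log_le_sub_one_of_pos hMspos
    linarith
  -- sqLogMoment identity
  have heW2 : eW2 W = m := rfl
  have hsql : sqLogMoment W = 2 * A / m - Real.log m := by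
    have hpt : ∀ ω, ((W ω)^2 / m) * Real.log ((W ω)^2 / m)
        = (2/m) * (W ω^2 * Real.log (W ω)) - (Real.log m / m) * W ω^2 := by
      intro ω
      rcases eq_or_lt_of_le (hWnn ω) with h0|h0
      · rw [← h0]; simp
      · rw [Real.log_div (pow_ne_zero 2 h0.ne') hm0'.ne', Real.log_pow]
        push_cast
        ring
    have heq : sqLogMoment W
        = ∫ ω, ((2/m) * (W ω^2 * Real.log (W ω)) - (Real.log m / m) * W ω^2) := by
      unfold sqLogMoment
      rw [heW2]
      exact integral_congr_ae (ae_of_all _ hpt)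
    rw [heq, integral_sub (hintsqlog.const_mul _) (hint2.const_mul _),
      integral_const_mul, integral_const_mul, ← hAdef, ← hmdef]
    field_simp
  obtain ⟨s, hs1, hs2, hMs⟩ := hseq
  by_cases hcase : sqLogMoment W ≤ Real.log b
  · -- Case 1
    have htan := tangent s (by linarith)
    have hF2 : 2 * A ≤ m * (Real.log b + Real.log m) := by
      rw [hsql] at hcase
      have h1 : 2 * A / m ≤ Real.log b + Real.log m := by linarith
      calc 2*A = (2*A/m)*m := by field_simp
      _ ≤ (Real.log b + Real.log m)*m := mul_le_mul_of_nonneg_right h1 hm0'.le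
      _ = m * (Real.log b + Real.log m) := by ring
    have hMsm : m * Real.log (∫ ω, W ω ^ s) < m * ((s-1) * Real.log b) :=
      mul_lt_mul_of_pos_left hMs hm0'
    have hkey : Real.log m < Real.log b := by
      have hs0 : (0:ℝ) < s := by linarith
      have e1 : (2-s)*(2*A) ≤ (2-s)*(m*(Real.log b + Real.log m)) :=
        mul_le_mul_of_nonneg_left hF2 (by linarith)
      have e2 : m * Real.log m + (s-2)*A < m*((s-1)*Real.log b) := by
        nlinarith [htan, hMsm]
      nlinarith [e1, e2, mul_pos hm0' hs0]
    simp only [DF]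
    rw [if_pos hcase, heW2]
    constructor
    · have h1 : Real.log m / Real.log b < 1 := (div_lt_one hL).2 hkey
      linarith
    · have h1 : 0 < Real.log m / Real.log b := div_pos hlogm hL
      linarith
  · -- Case 2
    simp only [DF]
    rw [if_neg hcase]
    set K' : ℝ := max (A / m) 0 with hK'def
    have hK'0 : 0 ≤ K' := le_max_right _ _
    have hKK' : A / m ≤ K' := le_max_left _ _
    set θ : ℝ := min (1/2 : ℝ) (Real.log m / (2*(K'+1))) with hθdef
    have hθpos : 0 < θ := lt_min (by norm_num) (div_pos hlogm (by positivity))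
    have hθhalf : θ ≤ 1/2 := min_le_left _ _
    set m₀ : ℝ := min (Real.log m/(K'+1)) (θ * Real.log b) with hm₀def
    have hm₀pos : 0 < m₀ := by
      have hKp0 : (0:ℝ) < K' + 1 := by linarith
      exact lt_min (div_pos hlogm hKp0) (mul_pos hθpos hL)
    have hval : ∀ t : ℝ, 1/2 ≤ t → t ≤ 1 →
        Real.log (∫ ω, (b:ℝ) ^ (1 - t) * W ω ^ (2*t))
          = (1-t) * Real.log b + Real.log (∫ ω, W ω ^ (2*t)) := by
      intro t ht1 ht2
      rw [integral_const_mul,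
        Real.log_mul (Real.rpow_pos_of_pos hb0 _).ne' (hM (2*t) (by linarith)).ne',
        Real.log_rpow hb0]
    have hlb : ∀ t : ℝ, 1/2 ≤ t → t ≤ 1 →
        m₀ ≤ (1-t) * Real.log b + Real.log (∫ ω, W ω ^ (2*t)) := by
      intro t ht1 ht2
      have hlog0 : 0 ≤ Real.log (∫ ω, W ω ^ (2*t)) := Real.log_nonneg (hM1 (2*t) (by linarith))
      have htan := tangent (2*t) (by linarith)
      have htan' : Real.log m + (2*t-2) * (A/m) ≤ Real.log (∫ ω, W ω ^ (2*t)) := by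
        have h2 : (2*t-2) * A / m ≤ Real.log (∫ ω, W ω ^ (2*t)) - Real.log m := by
          rw [div_le_iff₀ hm0']
          nlinarith [htan]
        have h3 : (2*t-2)*(A/m) = (2*t-2)*A/m := by ring
        rw [h3]
        linarith
      by_cases hc2 : t ≤ 1 - θ
      · have h1 : θ * Real.log b ≤ (1-t) * Real.log b :=
          mul_le_mul_of_nonneg_right (by linarith) hL.le
        have h2 := min_le_right (Real.log m/(K'+1)) (θ * Real.log b)
        rw [← hm₀def] at h2
        linarith
      · push_neg at hc2
        have hA1a : (2-2*t) * (A/m) ≤ (2-2*t) * K' :=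
          mul_le_mul_of_nonneg_left hKK' (by linarith)
        have hA1b : (2-2*t) * K' ≤ 2*θ*K' := by
          have := mul_le_mul_of_nonneg_right (show 2-2*t ≤ 2*θ by linarith) hK'0
          linarith
        have hθ2 : θ ≤ Real.log m / (2*(K'+1)) := min_le_right _ _
        have hKp : (0:ℝ) < K' + 1 := by linarith
        have h2 : 2*θ*K' ≤ Real.log m * K' / (K'+1) := by
          have h2a := mul_le_mul_of_nonneg_left hθ2 (by positivity : (0:ℝ) ≤ 2*K')
          calc 2*θ*K' = 2*K'*θ := by ring
          _ ≤ 2*K' * (Real.log m / (2*(K'+1))) := h2a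
          _ = Real.log m * K' / (K'+1) := by field_simp
        have h3 : Real.log m - Real.log m * K'/(K'+1) = Real.log m/(K'+1) := by
          field_simp
          ring
        have h4 : 0 ≤ (1-t) * Real.log b := mul_nonneg (by linarith) hL.le
        have h5 := min_le_left (Real.log m/(K'+1)) (θ * Real.log b)
        rw [← hm₀def] at h5
        linarith
    haveI : Nonempty (Set.Icc (1/2:ℝ) 1) := ⟨⟨1, by norm_num [Set.mem_Icc]⟩⟩
    set g : Set.Icc (1/2:ℝ) 1 → ℝ := fun t =>
      Real.log (∫ ω, (b : ℝ) ^ (1 - (t : ℝ)) * (W ω) ^ (2 * (t : ℝ))) / ((t : ℝ) * Real.log b)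
      with hgdef
    have hgbound : ∀ t : Set.Icc (1/2:ℝ) 1, m₀ / Real.log b ≤ g t := by
      intro t
      obtain ⟨ht1, ht2⟩ := t.2
      have htpos : (0:ℝ) < (t:ℝ) := by linarith
      have htL : 0 < (t:ℝ) * Real.log b := mul_pos htpos hL
      have hgt : g t = ((1-(t:ℝ)) * Real.log b + Real.log (∫ ω, W ω ^ (2*(t:ℝ))))
          / ((t:ℝ) * Real.log b) := by
        rw [hgdef]
        simp only
        rw [hval (t:ℝ) ht1 ht2]
      rw [hgt, le_div_iff₀ htL]
      have hN := hlb (t:ℝ) ht1 ht2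
      have he2 : m₀ / Real.log b * ((t:ℝ) * Real.log b) = m₀ * (t:ℝ) := by
        field_simp
      rw [he2]
      nlinarith [hm₀pos]
    have hbdd : BddBelow (Set.range g) := by
      refine ⟨m₀ / Real.log b, ?_⟩
      rintro x ⟨t, rfl⟩
      exact hgbound t
    have hlbI : m₀ / Real.log b ≤ ⨅ t, g t := le_ciInf hgbound
    have hts : (s/2 : ℝ) ∈ Set.Icc (1/2:ℝ) 1 := ⟨by linarith, by linarith⟩
    have hubI : (⨅ t, g t) ≤ g ⟨s/2, hts⟩ := ciInf_le hbdd _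
    have hgs : g ⟨s/2, hts⟩ < 1 := by
      have hgt : g ⟨s/2, hts⟩ = Real.log (∫ ω, (b : ℝ) ^ (1 - (s/2)) * (W ω) ^ (2 * (s/2)))
          / ((s/2) * Real.log b) := rfl
      rw [hgt, hval (s/2) (by linarith) (by linarith),
        div_lt_one (mul_pos (by linarith) hL), show 2*(s/2:ℝ) = s by ring]
      nlinarith [hMs, hL]
    have hIlt : (⨅ t, g t) < 1 := lt_of_le_of_lt hubI hgs
    have hIpos : 0 < (⨅ t, g t) := lt_of_lt_of_le (div_pos hm₀pos hL) hlbI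
    constructor
    · linarith
    · linarith


end MCCM
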